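/- (Lemma 2.4, maximum version) Let x, y ∈ ℝⁿ with y strictly decreasing (y₁ > y₂ > ⋯ > yₙ), and suppose the coordinates of x take at least k distinct values, i.e. the set {x₁, …, xₙ} has cardinality ≥ k. Then the set I_M(x,y) = {P : P is an n×n permutation matrix and Σᵢ (Pᵀ *ᵥ x)ᵢ · yᵢ = M(x,y)} has cardinality at most (n−k+1)!. -/

import Mathlib

open Matrix BigOperators

/-- A matrix is doubly stochastic: nonnegative entries, row sums and column sums all 1. -/
def IsDoublyStochastic {n : ℕ} (A : Matrix (Fin n) (Fin n) ℝ) : Prop :=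
  (∀ i j, 0 ≤ A i j) ∧ (∀ i, ∑ j, A i j = 1) ∧ (∀ j, ∑ i, A i j = 1)

/-- `Maj x y` means `x ≺ y`: `x` is majorized by `y`. -/
def Maj {n : ℕ} (x y : Fin n → ℝ) : Prop :=
  ∃ A : Matrix (Fin n) (Fin n) ℝ, IsDoublyStochastic A ∧ x = A *ᵥ y

/-- `MajEq x y` means `x ∼ y`: mutual majorization. -/
def MajEq {n : ℕ} (x y : Fin n → ℝ) : Prop := Maj x y ∧ Maj y x

/-- `P` is a permutation matrix. -/
def IsPermMatrix {n : ℕ} (P : Matrix (Fin n) (Fin n) ℝ) : Prop :=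
  ∃ σ : Equiv.Perm (Fin n), P = σ.permMatrix ℝ

/-- The increasing rearrangement `x↑` of a vector. -/
noncomputable def incSort {n : ℕ} (x : Fin n → ℝ) : Fin n → ℝ := x ∘ Tuple.sort x

/-- The decreasing rearrangement `x↓` of a vector. -/
noncomputable def decSort {n : ℕ} (x : Fin n → ℝ) : Fin n → ℝ :=
  fun i => (x ∘ Tuple.sort x) i.rev

lemma fact_mul_fact_le_aux (a b : ℕ) (ha : 1 ≤ a) (hb : 1 ≤ b) :
    a.factorial * b.factorial ≤ (a + b - 1).factorial := by
  have hle : a ≤ a + b - 1 := by omega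
  have h := Nat.choose_mul_factorial_mul_factorial hle
  have hsub : a + b - 1 - a = b - 1 := by omega
  rw [hsub] at h
  have hC : b ≤ (a + b - 1).choose a := by
    have h1 : (a + b - 1).choose a = (a + b - 1).choose (b - 1) := by
      rw [← Nat.choose_symm hle, hsub]
    have h2 : (b - 1 + 1).choose (b - 1) ≤ (a + b - 1).choose (b - 1) :=
      Nat.choose_le_choose _ (by omega)
    rw [Nat.choose_succ_self_right] at h2
    omega
  calc a.factorial * b.factorial
      = (a.factorial * (b - 1).factorial) * b := by
        rw [mul_assoc]; congr 1; rw [mul_comm]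
        conv_lhs => rw [show b = (b - 1) + 1 by omega]
        rw [Nat.factorial_succ]; congr 1; omega
    _ ≤ (a.factorial * (b - 1).factorial) * ((a + b - 1).choose a) :=
        Nat.mul_le_mul_left _ hC
    _ = (a + b - 1).factorial := by rw [← h]; ring

lemma prod_fact_le_aux {α : Type*} [DecidableEq α] (s : Finset α) (m : α → ℕ)
    (hm : ∀ i ∈ s, 1 ≤ m i) :
    ∏ i ∈ s, (m i).factorial ≤ ((∑ i ∈ s, m i) - s.card + 1).factorial := by
  induction s using Finset.induction_on with
  | empty => simp
  | insert a t ha ih =>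
    have hma : 1 ≤ m a := hm a (Finset.mem_insert_self a t)
    have hmt : ∀ i ∈ t, 1 ≤ m i := fun i hi => hm i (Finset.mem_insert_of_mem hi)
    have hct : t.card ≤ ∑ i ∈ t, m i := by
      calc t.card = ∑ _i ∈ t, 1 := by simp
        _ ≤ ∑ i ∈ t, m i := Finset.sum_le_sum hmt
    rw [Finset.prod_insert ha, Finset.sum_insert ha, Finset.card_insert_of_notMem ha]
    calc (m a).factorial * ∏ i ∈ t, (m i).factorial
        ≤ (m a).factorial * ((∑ i ∈ t, m i) - t.card + 1).factorial :=
          Nat.mul_le_mul_left _ (ih hmt)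
      _ ≤ (m a + ((∑ i ∈ t, m i) - t.card + 1) - 1).factorial :=
          fact_mul_fact_le_aux _ _ hma (by omega)
      _ = (m a + ∑ i ∈ t, m i - (t.card + 1) + 1).factorial := by congr 1; omega

lemma stab_card_le_aux {n : ℕ} (w : Fin n → ℝ) :
    Nat.card {σ : Equiv.Perm (Fin n) // w ∘ σ = w}
      ≤ ((n - (Finset.univ.image w).card) + 1).factorial := by
  classical
  set t := Finset.univ.image w with ht
  have hinj : Function.Injective
      (fun (σ : {σ : Equiv.Perm (Fin n) // w ∘ σ = w}) =>
        (fun v : t => σ.1.subtypePerm (p := fun i => w i = v.1)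
          (fun i => by
            constructor
            · intro h; rw [← h]; exact (congrFun σ.2 i).symm
            · intro h; rw [← h]; exact (congrFun σ.2 i)))) := by
    intro σ τ h
    apply Subtype.ext
    apply Equiv.ext
    intro i
    have hwi : w i ∈ t := Finset.mem_image_of_mem w (Finset.mem_univ i)
    have := congrFun h ⟨w i, hwi⟩
    have h2 := congrArg (fun (ρ : Equiv.Perm {j // w j = w i}) =>
      (ρ ⟨i, rfl⟩ : {j // w j = w i}).1) this
    simp only [Equiv.Perm.subtypePerm_apply] at h2
    exact h2
  have hle := Nat.card_le_card_of_injective _ hinj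
  have hcard : Nat.card ((v : t) → Equiv.Perm {i // w i = v.1})
      = ∏ v ∈ t, ((Finset.univ.filter fun i => w i = v).card).factorial := by
    rw [Nat.card_pi]
    rw [← Finset.prod_attach t
      (fun v => ((Finset.univ.filter fun i => w i = v).card).factorial)]
    apply Finset.prod_congr rfl
    intro v _
    rw [Nat.card_eq_fintype_card, Fintype.card_perm, Fintype.card_subtype]
  have hsum : ∑ v ∈ t, (Finset.univ.filter fun i => w i = v).card = n := by
    rw [← Finset.card_eq_sum_card_fiberwise
      (fun i _ => Finset.mem_image_of_mem w (Finset.mem_univ i))]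
    simp
  have hpos : ∀ v ∈ t, 1 ≤ (Finset.univ.filter fun i => w i = v).card := by
    intro v hv
    rw [ht, Finset.mem_image] at hv
    obtain ⟨i, _, rfl⟩ := hv
    exact Finset.card_pos.mpr ⟨i, by simp⟩
  calc Nat.card {σ : Equiv.Perm (Fin n) // w ∘ σ = w}
      ≤ ∏ v ∈ t, ((Finset.univ.filter fun i => w i = v).card).factorial := by
        rw [← hcard]; exact hle
    _ ≤ ((∑ v ∈ t, (Finset.univ.filter fun i => w i = v).card) - t.card + 1).factorial :=
        prod_fact_le_aux t _ hpos
    _ = (n - t.card + 1).factorial := by rw [hsum]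

lemma permMatrix_transpose_mulVec_aux {n : ℕ} (σ : Equiv.Perm (Fin n)) (x : Fin n → ℝ)
    (i : Fin n) : ((σ.permMatrix ℝ)ᵀ *ᵥ x) i = x (σ⁻¹ i) := by
  simp only [Matrix.mulVec, dotProduct, Matrix.transpose_apply,
    PEquiv.toMatrix_apply, Equiv.toPEquiv_apply, Option.mem_def, Option.some.injEq]
  rw [Finset.sum_congr rfl (fun j _ => ?_), Finset.sum_ite_eq' Finset.univ (σ⁻¹ i) x]
  · simp
  · by_cases h : j = σ⁻¹ i
    · simp [h]
    · have h2 : ¬ i = σ j := fun hj => h (by simp [hj])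
      simp [h, h2]
      exact (if_neg fun hj => h2 hj.symm).trans (if_neg h).symm

lemma permMatrix_injective_aux {n : ℕ} :
    Function.Injective (fun σ : Equiv.Perm (Fin n) => σ.permMatrix ℝ) := by
  intro σ τ h
  apply Equiv.ext
  intro i
  by_contra hne
  have h1 : (σ.permMatrix ℝ) i (σ i) = 1 := by
    simp [PEquiv.toMatrix_apply, Equiv.toPEquiv_apply]
  have h2 : (τ.permMatrix ℝ) i (σ i) = 0 := by
    simp only [PEquiv.toMatrix_apply, Equiv.toPEquiv_apply, Option.mem_def,
      Option.some.injEq]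
    rw [if_neg (fun hc : τ i = σ i => hne hc.symm)]
  simp only at h
  rw [h] at h1
  rw [h1] at h2
  norm_num at h2

/-- Lemma 2.4, maximum version: if `x` has at least `k` distinct
coordinate values and `y` is strictly decreasing, then
`|I_M(x,y)| ≤ (n - k + 1)!`. -/
theorem card_IM_le {n k : ℕ} (x y : Fin n → ℝ) (hy : StrictAnti y)
    (hx : k ≤ (Finset.univ.image x).card) :
    {P : Matrix (Fin n) (Fin n) ℝ | IsPermMatrix P ∧
      ∑ i, (Pᵀ *ᵥ x) i * y i = ∑ i, decSort x i * decSort y i}.ncard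
      ≤ (n - k + 1).factorial := by
  classical
  set w := decSort x with hwdef
  set e : Equiv.Perm (Fin n) := Fin.revPerm.trans (Tuple.sort x) with he
  have hwe : ∀ i, w i = x (e i) := fun i => rfl
  have hrev : Antitone (Fin.rev : Fin n → Fin n) := fun i j h => Fin.rev_le_rev.mpr h
  have hw_anti : Antitone w := fun i j hij => Tuple.monotone_sort x (hrev hij)
  have hdy : ∀ i, decSort y i = y i := by
    intro i
    have hmono : Monotone (y ∘ (Fin.revPerm : Equiv.Perm (Fin n))) :=
      hy.antitone.comp hrev
    have h := (Tuple.comp_sort_eq_comp_iff_monotone (f := y)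
      (σ := Fin.revPerm)).mpr hmono
    have h2 := congrFun h i.rev
    simp only [Function.comp_apply, Fin.revPerm_apply, Fin.rev_rev] at h2
    exact h2.symm
  have hMono : Monovary w y := by
    intro i j hlt
    have hji : j ≤ i := by
      by_contra hc
      exact absurd (hy.antitone (le_of_not_ge hc)) (not_le.mpr hlt)
    exact hw_anti hji
  have himg : Finset.univ.image w = Finset.univ.image x := by
    have hcomp : w = x ∘ e := funext fun i => hwe i
    rw [hcomp, ← Finset.image_image, Finset.image_univ_equiv]
  -- rewrite the RHS of the sum condition
  have hrhs : ∑ i, decSort x i * decSort y i = ∑ i, w i * y i :=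
    Finset.sum_congr rfl (fun i _ => by rw [hdy])
  -- describe the set as an image of a set of permutations
  set T : Set (Equiv.Perm (Fin n)) :=
    {σ | ∑ i, x (σ⁻¹ i) * y i = ∑ i, w i * y i} with hT
  have hset : {P : Matrix (Fin n) (Fin n) ℝ | IsPermMatrix P ∧
      ∑ i, (Pᵀ *ᵥ x) i * y i = ∑ i, decSort x i * decSort y i}
      = (fun σ : Equiv.Perm (Fin n) => σ.permMatrix ℝ) '' T := by
    ext P
    simp only [Set.mem_setOf_eq, Set.mem_image, hT]
    constructor
    · rintro ⟨⟨σ, rfl⟩, hsum⟩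
      refine ⟨σ, ?_, rfl⟩
      rw [← hrhs, ← hsum]
      exact Finset.sum_congr rfl
        (fun i _ => by rw [permMatrix_transpose_mulVec_aux])
    · rintro ⟨σ, hσ, rfl⟩
      refine ⟨⟨σ, rfl⟩, ?_⟩
      rw [hrhs, ← hσ]
      exact Finset.sum_congr rfl
        (fun i _ => by rw [permMatrix_transpose_mulVec_aux])
  rw [hset, Set.ncard_image_of_injective T permMatrix_injective_aux]
  -- every element of T gives a stabilizing permutation of w
  have hTstab : ∀ σ ∈ T, w ∘ ((σ⁻¹ : Equiv.Perm (Fin n)).trans e.symm) = w := by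
    intro σ hσ
    set τ : Equiv.Perm (Fin n) := (σ⁻¹ : Equiv.Perm (Fin n)).trans e.symm with hτ
    have hxτ : ∀ i, w (τ i) = x (σ⁻¹ i) := by
      intro i
      rw [hwe]
      simp [hτ]
    have hsum : ∑ i, w (τ i) * y i = ∑ i, w i * y i := by
      rw [Finset.sum_congr rfl (fun i _ => by rw [hxτ])]
      exact hσ
    have hmv : Monovary (w ∘ τ) y :=
      (hMono.sum_comp_perm_mul_eq_sum_mul_iff).mp hsum
    have hτanti : Antitone (w ∘ τ) := by
      intro i j hij
      rcases eq_or_lt_of_le hij with rfl | hlt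
      · exact le_refl _
      · exact hmv (hy hlt)
    have h1 : w ∘ (Fin.revPerm.trans τ : Equiv.Perm (Fin n)) = w ∘ Tuple.sort w :=
      Tuple.comp_sort_eq_comp_iff_monotone.mpr (hτanti.comp hrev)
    have h2 : w ∘ (Fin.revPerm : Equiv.Perm (Fin n)) = w ∘ Tuple.sort w :=
      Tuple.comp_sort_eq_comp_iff_monotone.mpr (hw_anti.comp hrev)
    funext i
    have h3 := congrFun (h1.trans h2.symm) i.rev
    simpa [Fin.rev_rev] using h3
  -- injection from T into the stabilizer
  have hTle : T.ncard ≤ Nat.card {τ : Equiv.Perm (Fin n) // w ∘ τ = w} := by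
    rw [← Nat.card_coe_set_eq T]
    apply Nat.card_le_card_of_injective
      (fun σ : T => (⟨(σ.1⁻¹ : Equiv.Perm (Fin n)).trans e.symm, hTstab σ.1 σ.2⟩ :
        {τ : Equiv.Perm (Fin n) // w ∘ τ = w}))
    intro σ σ' hh
    apply Subtype.ext
    have h4 : (σ.1⁻¹ : Equiv.Perm (Fin n)).trans e.symm
        = (σ'.1⁻¹ : Equiv.Perm (Fin n)).trans e.symm := congrArg Subtype.val hh
    have h5 : (σ.1)⁻¹ = (σ'.1)⁻¹ := by
      have := congrArg (fun ρ : Equiv.Perm (Fin n) => ρ.trans e) h4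
      simpa [Equiv.trans_assoc] using this
    exact inv_injective h5
  calc T.ncard ≤ Nat.card {τ : Equiv.Perm (Fin n) // w ∘ τ = w} := hTle
    _ ≤ ((n - (Finset.univ.image w).card) + 1).factorial := stab_card_le_aux w
    _ ≤ (n - k + 1).factorial := by
        apply Nat.factorial_le
        rw [himg]
        omega
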